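/- Let G₁ and G₂ be nontrivial finitely generated groups with finite generating sets S₁ and S₂, and consider Bernoulli bond percolation on the Cayley graph of G₁*G₂ with respect to S₁ ⊔ S₂. Let P₁ be the set of nontrivial elements of G₁*G₂ whose normal form begins with a nontrivial syllable of G₁, and P₂ similarly for G₂; let A(p) (resp. B(p)) be the P_p-probability that the cluster of the identity e in the subgraph using only open edges with both endpoints in {e} ∪ P₁ (resp. {e} ∪ P₂) is infinite. Then for every p ∈ [0,1], the percolation function satisfies θ(p) = A(p) + B(p) − A(p)·B(p). -/

import Mathlib

open MeasureTheory ENNReal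

namespace Perc

/-- Percolation configurations on the edge set `E`: each edge is `true` (open) or
`false` (closed). -/
abbrev Config (E : Type*) := E → Bool

/-- `μ` is the Bernoulli product measure `P_p` with parameter `p` on `{0,1}^E`: the measure
of every finite cylinder event is the corresponding product.  (This determines `μ` uniquely
on the product σ-algebra, since cylinders form a π-system generating it.) -/
def IsBernoulli {E : Type*} (p : ℝ) (μ : Measure (Config E)) : Prop :=
  ∀ (F : Finset E) (σ : E → Bool),
    μ {ω | ∀ e ∈ F, ω e = σ e} =
      ∏ e ∈ F, ENNReal.ofReal (if σ e then p else 1 - p)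

variable {G ι : Type*} [Group G]

/-- In the Cayley graph of `G` with edge set `G × ι`, where the edge `(a, i)` joins `a` and
`a * f i` (the function `f : ι → G` lists the generators, with multiplicity), this says that
vertices `a` and `b` are joined by some open edge of the configuration `ω`. -/
def Step (f : ι → G) (ω : Config (G × ι)) (a b : G) : Prop :=
  ∃ i : ι, (ω (a, i) = true ∧ b = a * f i) ∨ (ω (b, i) = true ∧ a = b * f i)

/-- `x` and `y` are connected by a path of open edges (`x ↔ y`). -/
def Conn (f : ι → G) (ω : Config (G × ι)) (x y : G) : Prop :=
  Relation.ReflTransGen (Step f ω) x y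

/-- The open cluster `C` of the identity. -/
def cluster (f : ι → G) (ω : Config (G × ι)) : Set G :=
  {x | Conn f ω 1 x}

/-- The percolation function `θ`: the probability that the cluster of the identity is
infinite. -/
noncomputable def theta (f : ι → G) (μ : Measure (Config (G × ι))) : ℝ :=
  (μ {ω | (cluster f ω).Infinite}).toReal

/-- The expected cluster size `χ = E(|C|) ∈ [0,∞]` (where `|C| ∈ ℕ∞` is coerced
to `ℝ≥0∞`). -/
noncomputable def chi (f : ι → G) (μ : Measure (Config (G × ι))) : ℝ≥0∞ :=
  ∫⁻ ω, ((cluster f ω).encard : ℝ≥0∞) ∂μ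

/-- The critical probability `p_c = inf {p ∈ [0,1] | θ(p) > 0}`, with the convention
`p_c = 1` if `θ` vanishes on `[0,1]`; here `μ p` is the percolation measure at
parameter `p`. -/
noncomputable def pc (f : ι → G) (μ : ℝ → Measure (Config (G × ι))) : ℝ :=
  sInf ({p | p ∈ Set.Icc (0 : ℝ) 1 ∧ 0 < theta f (μ p)} ∪ {1})

/-- The word metric on `G` with respect to the generators `f i`: the length of a shortest
word in the generators and their inverses taking `x` to `y`.  (When the generators generate
`G`, this is the graph distance in the Cayley graph.) -/
noncomputable def wdist (f : ι → G) (x y : G) : ℕ :=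
  sInf {n : ℕ | ∃ l : List G, l.length = n ∧
    (∀ g ∈ l, (∃ i, f i = g) ∨ (∃ i, (f i)⁻¹ = g)) ∧ x * l.prod = y}

/-- Schonmann's critical point
`p_exp = sup {p ∈ [0,1] | ∃ c > 0, γ > 0, ∀ x y, P_p(x ↔ y) ≤ c·exp(-γ·dist(x,y))}`. -/
noncomputable def pexp (f : ι → G) (μ : ℝ → Measure (Config (G × ι))) : ℝ :=
  sSup {p | p ∈ Set.Icc (0 : ℝ) 1 ∧ ∃ c > 0, ∃ γ > 0, ∀ x y : G,
    (μ p {ω | Conn f ω x y}).toReal ≤ c * Real.exp (-γ * (wdist f x y : ℝ))}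

/-- The walk-through function `g(p,t) = 1 - ∑_{n≥1} (1-t)^{n-1} P_p(|C| = n)` of a Cayley
graph; here `μ` is the percolation measure at parameter `p`. -/
noncomputable def wt (f : ι → G) (μ : Measure (Config (G × ι))) (t : ℝ) : ℝ :=
  1 - ∑' n : ℕ, (1 - t) ^ n * (μ {ω | (cluster f ω).encard = ((n + 1 : ℕ) : ℕ∞)}).toReal

/-- The ball of radius `j`: all products of at most `j` elements of `S ∪ S⁻¹`. -/
def ball (S : Set G) (j : ℕ) : Set G :=
  {g | ∃ l : List G, l.length ≤ j ∧ (∀ x ∈ l, x ∈ S ∨ x⁻¹ ∈ S) ∧ l.prod = g}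

/-- The Cheeger constant `h = inf_K |∂K| / |K|`, the infimum over nonempty finite vertex
sets `K` of the number of edges `(a, i)` (joining `a` and `a * f i`) with exactly one
endpoint in `K`, divided by `|K|`. -/
noncomputable def cheeger (f : ι → G) : ℝ :=
  ⨅ K : {K : Finset G // K.Nonempty},
    (Nat.card {e : G × ι // Xor' (e.1 ∈ K.1) (e.1 * f e.2 ∈ K.1)} : ℝ) / (K.1.card : ℝ)

/-- The open cluster of the identity in the subgraph induced on the vertex set `V`: only
open edges with both endpoints in `V` may be used. -/
def clusterIn (f : ι → G) (V : Set G) (ω : Config (G × ι)) : Set G :=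
  {x | Relation.ReflTransGen (fun a b => Step f ω a b ∧ a ∈ V ∧ b ∈ V) 1 x}

/-- The generators of `G` given by a generating set `S` (one edge orbit per element
of `S`). -/
def setGens (S : Set G) : S → G := Subtype.val

/-- The generators of the free product `G₁ * G₂` given by the disjoint union `S₁ ⊔ S₂` of
generating sets, embedded via the canonical monomorphisms. -/
def coprodGens {G₁ G₂ : Type*} [Group G₁] [Group G₂] (S₁ : Set G₁) (S₂ : Set G₂) :
    S₁ ⊕ S₂ → Monoid.Coprod G₁ G₂ :=
  Sum.elim (fun s => Monoid.Coprod.inl (s : G₁)) (fun s => Monoid.Coprod.inr (s : G₂))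

/-- The generators of the free product `G₁ * ⋯ * G_n` given by the disjoint union
`S₁ ⊔ ⋯ ⊔ S_n` of generating sets, embedded via the canonical monomorphisms. -/
def coprodIGens {n : ℕ} {G : Fin n → Type*} [∀ i, Group (G i)] (S : ∀ i, Set (G i)) :
    (Σ i, S i) → Monoid.CoprodI G :=
  fun x => Monoid.CoprodI.of (x.2 : G x.1)

/-- The image of a list of syllables in the free product `G₁ * G₂`. -/
def sylProd {G₁ G₂ : Type*} [Group G₁] [Group G₂] (l : List (G₁ ⊕ G₂)) :
    Monoid.Coprod G₁ G₂ :=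
  (l.map (Sum.elim (fun g => Monoid.Coprod.inl g) (fun h => Monoid.Coprod.inr h))).prod

/-- The set `P₁` of nontrivial elements of `G₁ * G₂` whose normal form begins with a
nontrivial syllable of `G₁`: elements represented by a nonempty alternating product of
nontrivial syllables, the first syllable lying in `G₁`.  (Such a representation is the
normal form, which is unique.) -/
def beginsLeft {G₁ G₂ : Type*} [Group G₁] [Group G₂] (x : Monoid.Coprod G₁ G₂) : Prop :=
  ∃ l : List (G₁ ⊕ G₂), l ≠ [] ∧ (∀ a ∈ l, a ≠ Sum.inl 1 ∧ a ≠ Sum.inr 1) ∧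
    l.Chain' (fun a b => a.isLeft ≠ b.isLeft) ∧
    (∃ g : G₁, l.head? = some (Sum.inl g)) ∧ sylProd l = x

/-- The set `P₂` of nontrivial elements of `G₁ * G₂` whose normal form begins with a
nontrivial syllable of `G₂`. -/
def beginsRight {G₁ G₂ : Type*} [Group G₁] [Group G₂] (x : Monoid.Coprod G₁ G₂) : Prop :=
  ∃ l : List (G₁ ⊕ G₂), l ≠ [] ∧ (∀ a ∈ l, a ≠ Sum.inl 1 ∧ a ≠ Sum.inr 1) ∧
    l.Chain' (fun a b => a.isLeft ≠ b.isLeft) ∧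
    (∃ h : G₂, l.head? = some (Sum.inr h)) ∧ sylProd l = x

end Perc

open Perc

namespace PercAux
section SecA


open Monoid Perc

universe u v

variable {G₁ : Type u} {G₂ : Type v} [Group G₁] [Group G₂]

def Fam (G₁ : Type u) (G₂ : Type v) : Bool → Type (max u v) :=
  fun b => cond b (ULift.{v} G₁) (ULift.{u} G₂)

instance : ∀ b, Group (Fam G₁ G₂ b) := fun b => match b with
  | true => inferInstanceAs (Group (ULift G₁))
  | false => inferInstanceAs (Group (ULift G₂))

def toLetter : G₁ ⊕ G₂ → Σ b, Fam G₁ G₂ b :=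
  Sum.elim (fun g => ⟨true, ULift.up g⟩) (fun h => ⟨false, ULift.up h⟩)

noncomputable def upHom₁ : G₁ →* ULift.{v} G₁ := (MulEquiv.ulift (α := G₁)).symm.toMonoidHom
noncomputable def upHom₂ : G₂ →* ULift.{u} G₂ := (MulEquiv.ulift (α := G₂)).symm.toMonoidHom

noncomputable def φ : Coprod G₁ G₂ →* CoprodI (Fam G₁ G₂) :=
  Coprod.lift ((CoprodI.of (M := Fam G₁ G₂) (i := true)).comp upHom₁)
    ((CoprodI.of (M := Fam G₁ G₂) (i := false)).comp upHom₂)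

def syl : G₁ ⊕ G₂ → Coprod G₁ G₂ :=
  Sum.elim (fun g => Coprod.inl g) (fun h => Coprod.inr h)

theorem sylProd_eq (l : List (G₁ ⊕ G₂)) : sylProd l = (l.map syl).prod := rfl

theorem sylProd_append (L : List (G₁ ⊕ G₂)) (a : G₁ ⊕ G₂) :
    sylProd (L ++ [a]) = sylProd L * syl a := by
  simp [sylProd_eq, List.map_append]

theorem up_eq_one₁ {g : G₁} (h : (ULift.up g : ULift.{v} G₁) = 1) : g = 1 :=
  congrArg ULift.down h

theorem up_eq_one₂ {h' : G₂} (h : (ULift.up h' : ULift.{u} G₂) = 1) : h' = 1 :=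
  congrArg ULift.down h

theorem word_of_list (l : List (G₁ ⊕ G₂))
    (hnt : ∀ a ∈ l, a ≠ Sum.inl 1 ∧ a ≠ Sum.inr 1)
    (hch : l.Chain' (fun a b => a.isLeft ≠ b.isLeft)) :
    ∃ w : CoprodI.Word (Fam G₁ G₂), w.toList = l.map toLetter ∧
      w.prod = φ (sylProd l) := by
  refine ⟨⟨l.map toLetter, ?_, ?_⟩, rfl, ?_⟩
  · intro a ha
    rw [List.mem_map] at ha
    obtain ⟨b, hb, rfl⟩ := ha
    rcases b with g | h
    · exact fun h1 => (hnt _ hb).1 (by rw [up_eq_one₁ h1])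
    · exact fun h1 => (hnt _ hb).2 (by rw [up_eq_one₂ h1])
  · rw [List.isChain_map]
    refine hch.imp ?_
    rintro (g | g) (h | h) hab <;> simp_all [toLetter]
  · show ((l.map toLetter).map fun p => CoprodI.of p.snd).prod = _
    rw [sylProd_eq, map_list_prod φ, List.map_map, List.map_map]
    congr 1
    refine List.map_congr_left ?_
    rintro (g | h) _
    · show CoprodI.of (M := Fam G₁ G₂) (i := true) (ULift.up g) = φ (Coprod.inl g)
      rw [φ, Coprod.lift_apply_inl]; rfl
    · show CoprodI.of (M := Fam G₁ G₂) (i := false) (ULift.up h) = φ (Coprod.inr h)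
      rw [φ, Coprod.lift_apply_inr]; rfl

theorem word_prod_injective :
    Function.Injective (CoprodI.Word.prod (M := Fam G₁ G₂)) := by
  classical
  intro w w' h
  exact (CoprodI.Word.equiv (M := Fam G₁ G₂)).symm.injective h

/-- uniqueness: the letter lists of two reduced representations agree -/
theorem lists_eq {l l' : List (G₁ ⊕ G₂)}
    (hnt : ∀ a ∈ l, a ≠ Sum.inl 1 ∧ a ≠ Sum.inr 1)
    (hch : l.Chain' (fun a b => a.isLeft ≠ b.isLeft))
    (hnt' : ∀ a ∈ l', a ≠ Sum.inl 1 ∧ a ≠ Sum.inr 1)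
    (hch' : l'.Chain' (fun a b => a.isLeft ≠ b.isLeft))
    (hprod : sylProd l = sylProd (G₁ := G₁) (G₂ := G₂) l') :
    l.map toLetter = l'.map toLetter := by
  obtain ⟨w, hw, hp⟩ := word_of_list l hnt hch
  obtain ⟨w', hw', hp'⟩ := word_of_list l' hnt' hch'
  have : w = w' := word_prod_injective (by rw [hp, hp', hprod])
  rw [← hw, ← hw', this]

theorem not_beginsLeft_of_beginsRight {x : Coprod G₁ G₂} (h : beginsRight x) :
    ¬ beginsLeft x := by
  rintro ⟨l, hne, hnt, hch, ⟨g, hg⟩, hp⟩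
  obtain ⟨l', hne', hnt', hch', ⟨hh, hh'⟩, hp'⟩ := h
  have heq := lists_eq hnt hch hnt' hch' (hp.trans hp'.symm)
  have := congrArg List.head? heq
  rw [List.head?_map, List.head?_map, hg, hh'] at this
  simp only [Option.map_some] at this
  have := congrArg (fun o => (Option.map Sigma.fst o)) this
  simp [toLetter] at this

theorem beginsLeft_ne_one {x : Coprod G₁ G₂} (h : beginsLeft x) : x ≠ 1 := by
  rintro rfl
  obtain ⟨l, hne, hnt, hch, _, hp⟩ := h
  obtain ⟨w, hw, hp'⟩ := word_of_list l hnt hch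
  have : w = CoprodI.Word.empty := word_prod_injective (by
    rw [hp', hp, map_one, CoprodI.Word.prod_empty])
  rw [this] at hw
  exact hne (by simpa using hw.symm)

theorem beginsRight_ne_one {x : Coprod G₁ G₂} (h : beginsRight x) : x ≠ 1 := by
  rintro rfl
  obtain ⟨l, hne, hnt, hch, _, hp⟩ := h
  obtain ⟨w, hw, hp'⟩ := word_of_list l hnt hch
  have : w = CoprodI.Word.empty := word_prod_injective (by
    rw [hp', hp, map_one, CoprodI.Word.prod_empty])
  rw [this] at hw
  exact hne (by simpa using hw.symm)


abbrev NT (l : List (G₁ ⊕ G₂)) : Prop := ∀ a ∈ l, a ≠ Sum.inl 1 ∧ a ≠ Sum.inr 1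
abbrev CH (l : List (G₁ ⊕ G₂)) : Prop := l.Chain' (fun a b => a.isLeft ≠ b.isLeft)

theorem master_inl (s : G₁) {l : List (G₁ ⊕ G₂)} (hne : l ≠ [])
    (hnt : NT l) (hch : CH l) :
    sylProd l * Coprod.inl s = 1 ∨
      ∃ l', l' ≠ [] ∧ NT l' ∧ CH l' ∧
        l'.head?.map Sum.isLeft = l.head?.map Sum.isLeft ∧
        sylProd l' = sylProd l * Coprod.inl s := by
  by_cases hs : s = 1
  · exact Or.inr ⟨l, hne, hnt, hch, rfl, by rw [hs, map_one, mul_one]⟩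
  rcases List.eq_nil_or_concat l with rfl | ⟨L, b, rfl⟩
  · exact absurd rfl hne
  rw [List.concat_eq_append] at *
  rcases b with t | t
  · -- last letter from G₁
    by_cases hts : t * s = 1
    · rcases L with _ | ⟨c, L'⟩
      · left
        have h1 : sylProd [Sum.inl t] * Coprod.inl s = (Coprod.inl (t * s) : Coprod G₁ G₂) := by
          rw [sylProd_eq]
          simp only [List.map_cons, List.map_nil, List.prod_cons, List.prod_nil, mul_one]
          show Coprod.inl t * Coprod.inl s = _
          rw [← map_mul]
        rw [List.nil_append, h1, hts, map_one]
      · right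
        refine ⟨c :: L', by simp, fun a ha => hnt a (List.mem_append_left _ ha),
          (List.isChain_append.1 hch).1, by simp, ?_⟩
        rw [sylProd_append, mul_assoc]
        show _ = _ * (Coprod.inl t * Coprod.inl s)
        rw [← map_mul, hts, map_one, mul_one]
    · right
      refine ⟨L ++ [Sum.inl (t * s)], by simp, ?_, ?_, ?_, ?_⟩
      · intro a ha
        rcases List.mem_append.1 ha with h | h
        · exact hnt a (List.mem_append_left _ h)
        · simp only [List.mem_singleton] at h
          subst h
          exact ⟨fun h' => hts (Sum.inl.inj h'), by simp⟩
      · refine List.isChain_append.2 ⟨(List.isChain_append.1 hch).1, List.isChain_singleton _, ?_⟩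
        intro x hx y hy
        simp only [List.head?_cons, Option.mem_def, Option.some.injEq] at hy
        subst hy
        have := (List.isChain_append.1 hch).2.2 x hx (Sum.inl t) (by simp)
        simpa using this
      · rcases L with _ | ⟨c, L'⟩ <;> simp
      · rw [sylProd_append, sylProd_append, mul_assoc]
        show _ * Coprod.inl (t * s) = _ * (Coprod.inl t * Coprod.inl s)
        rw [map_mul]
  · -- last letter from G₂: append
    right
    refine ⟨(L ++ [Sum.inr t]) ++ [Sum.inl s], by simp, ?_, ?_, ?_, ?_⟩
    · intro a ha
      rcases List.mem_append.1 ha with h | h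
      · exact hnt a h
      · simp only [List.mem_singleton] at h
        subst h
        exact ⟨fun h' => hs (Sum.inl.inj h'), by simp⟩
    · refine List.isChain_append.2 ⟨hch, List.isChain_singleton _, ?_⟩
      intro x hx y hy
      rw [List.getLast?_concat] at hx
      simp only [Option.mem_def, Option.some.injEq] at hx hy
      subst hx
      simp only [List.head?_cons, Option.some.injEq] at hy
      subst hy
      simp
    · rcases L with _ | ⟨c, L'⟩ <;> simp
    · rw [sylProd_append]; rfl

theorem master_inr (s : G₂) {l : List (G₁ ⊕ G₂)} (hne : l ≠ [])
    (hnt : NT l) (hch : CH l) :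
    sylProd l * Coprod.inr s = 1 ∨
      ∃ l', l' ≠ [] ∧ NT l' ∧ CH l' ∧
        l'.head?.map Sum.isLeft = l.head?.map Sum.isLeft ∧
        sylProd l' = sylProd l * Coprod.inr s := by
  by_cases hs : s = 1
  · exact Or.inr ⟨l, hne, hnt, hch, rfl, by rw [hs, map_one, mul_one]⟩
  rcases List.eq_nil_or_concat l with rfl | ⟨L, b, rfl⟩
  · exact absurd rfl hne
  rw [List.concat_eq_append] at *
  rcases b with t | t
  · -- last letter from G₁: append
    right
    refine ⟨(L ++ [Sum.inl t]) ++ [Sum.inr s], by simp, ?_, ?_, ?_, ?_⟩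
    · intro a ha
      rcases List.mem_append.1 ha with h | h
      · exact hnt a h
      · simp only [List.mem_singleton] at h
        subst h
        exact ⟨by simp, fun h' => hs (Sum.inr.inj h')⟩
    · refine List.isChain_append.2 ⟨hch, List.isChain_singleton _, ?_⟩
      intro x hx y hy
      rw [List.getLast?_concat] at hx
      simp only [Option.mem_def, Option.some.injEq] at hx hy
      subst hx
      simp only [List.head?_cons, Option.some.injEq] at hy
      subst hy
      simp
    · rcases L with _ | ⟨c, L'⟩ <;> simp
    · rw [sylProd_append]; rfl
  · -- last letter from G₂
    by_cases hts : t * s = 1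
    · rcases L with _ | ⟨c, L'⟩
      · left
        have h1 : sylProd [Sum.inr t] * Coprod.inr s = (Coprod.inr (t * s) : Coprod G₁ G₂) := by
          rw [sylProd_eq]
          simp only [List.map_cons, List.map_nil, List.prod_cons, List.prod_nil, mul_one]
          show Coprod.inr t * Coprod.inr s = _
          rw [← map_mul]
        rw [List.nil_append, h1, hts, map_one]
      · right
        refine ⟨c :: L', by simp, fun a ha => hnt a (List.mem_append_left _ ha),
          (List.isChain_append.1 hch).1, by simp, ?_⟩
        rw [sylProd_append, mul_assoc]
        show _ = _ * (Coprod.inr t * Coprod.inr s)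
        rw [← map_mul, hts, map_one, mul_one]
    · right
      refine ⟨L ++ [Sum.inr (t * s)], by simp, ?_, ?_, ?_, ?_⟩
      · intro a ha
        rcases List.mem_append.1 ha with h | h
        · exact hnt a (List.mem_append_left _ h)
        · simp only [List.mem_singleton] at h
          subst h
          exact ⟨by simp, fun h' => hts (Sum.inr.inj h')⟩
      · refine List.isChain_append.2 ⟨(List.isChain_append.1 hch).1, List.isChain_singleton _, ?_⟩
        intro x hx y hy
        simp only [List.head?_cons, Option.mem_def, Option.some.injEq] at hy
        subst hy
        have := (List.isChain_append.1 hch).2.2 x hx (Sum.inr t) (by simp)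
        simpa using this
      · rcases L with _ | ⟨c, L'⟩ <;> simp
      · rw [sylProd_append, sylProd_append, mul_assoc]
        show _ * Coprod.inr (t * s) = _ * (Coprod.inr t * Coprod.inr s)
        rw [map_mul]

theorem beginsLeft_of {x : Coprod G₁ G₂} (l : List (G₁ ⊕ G₂)) (hne : l ≠ []) (hnt : NT l)
    (hch : CH l) (hhead : l.head?.map Sum.isLeft = some true) (hp : sylProd l = x) :
    beginsLeft x := by
  rcases hl : l.head? with _ | a
  · rw [hl] at hhead; simp at hhead
  rw [hl] at hhead
  rcases a with g | h
  · exact ⟨l, hne, hnt, hch, ⟨g, hl⟩, hp⟩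
  · simp at hhead

theorem beginsRight_of {x : Coprod G₁ G₂} (l : List (G₁ ⊕ G₂)) (hne : l ≠ []) (hnt : NT l)
    (hch : CH l) (hhead : l.head?.map Sum.isLeft = some false) (hp : sylProd l = x) :
    beginsRight x := by
  rcases hl : l.head? with _ | a
  · rw [hl] at hhead; simp at hhead
  rw [hl] at hhead
  rcases a with g | h
  · simp at hhead
  · exact ⟨l, hne, hnt, hch, ⟨h, hl⟩, hp⟩

theorem beginsLeft_inl {s : G₁} (hs : s ≠ 1) : beginsLeft (Coprod.inl s : Coprod G₁ G₂) := by
  refine ⟨[Sum.inl s], by simp, ?_, List.isChain_singleton _, ⟨s, rfl⟩, ?_⟩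
  · intro a ha
    simp only [List.mem_singleton] at ha
    subst ha
    exact ⟨fun h' => hs (Sum.inl.inj h'), by simp⟩
  · rw [sylProd_eq]
    simp only [List.map_cons, List.map_nil, List.prod_cons, List.prod_nil, mul_one]
    rfl

theorem beginsRight_inr {s : G₂} (hs : s ≠ 1) : beginsRight (Coprod.inr s : Coprod G₁ G₂) := by
  refine ⟨[Sum.inr s], by simp, ?_, List.isChain_singleton _, ⟨s, rfl⟩, ?_⟩
  · intro a ha
    simp only [List.mem_singleton] at ha
    subst ha
    exact ⟨by simp, fun h' => hs (Sum.inr.inj h')⟩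
  · rw [sylProd_eq]
    simp only [List.map_cons, List.map_nil, List.prod_cons, List.prod_nil, mul_one]
    rfl

theorem beginsLeft_mul_inl {x : Coprod G₁ G₂} (h : beginsLeft x) (s : G₁) :
    x * Coprod.inl s = 1 ∨ beginsLeft (x * Coprod.inl s) := by
  obtain ⟨l, hne, hnt, hch, ⟨g, hg⟩, rfl⟩ := h
  rcases master_inl s hne hnt hch with h1 | ⟨l', hne', hnt', hch', hh', hp'⟩
  · exact Or.inl h1
  · refine Or.inr (beginsLeft_of l' hne' hnt' hch' ?_ hp')
    rw [hh', hg]; rfl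

theorem beginsRight_mul_inr {x : Coprod G₁ G₂} (h : beginsRight x) (s : G₂) :
    x * Coprod.inr s = 1 ∨ beginsRight (x * Coprod.inr s) := by
  obtain ⟨l, hne, hnt, hch, ⟨g, hg⟩, rfl⟩ := h
  rcases master_inr s hne hnt hch with h1 | ⟨l', hne', hnt', hch', hh', hp'⟩
  · exact Or.inl h1
  · refine Or.inr (beginsRight_of l' hne' hnt' hch' ?_ hp')
    rw [hh', hg]; rfl

theorem beginsLeft_mul_inr {x : Coprod G₁ G₂} (h : beginsLeft x) (s : G₂) :
    beginsLeft (x * Coprod.inr s) := by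
  have h0 := h
  obtain ⟨l, hne, hnt, hch, ⟨g, hg⟩, rfl⟩ := h
  rcases master_inr s hne hnt hch with h1 | ⟨l', hne', hnt', hch', hh', hp'⟩
  · exfalso
    have hx : sylProd l = (Coprod.inr s⁻¹ : Coprod G₁ G₂) := by
      rw [eq_inv_of_mul_eq_one_left h1, ← map_inv]
    by_cases hs1 : s⁻¹ = (1 : G₂)
    · rw [hs1, map_one] at hx
      exact beginsLeft_ne_one h0 hx
    · exact not_beginsLeft_of_beginsRight (hx ▸ beginsRight_inr hs1) h0
  · refine beginsLeft_of l' hne' hnt' hch' ?_ hp'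
    rw [hh', hg]; rfl

theorem beginsRight_mul_inl {x : Coprod G₁ G₂} (h : beginsRight x) (s : G₁) :
    beginsRight (x * Coprod.inl s) := by
  have h0 := h
  obtain ⟨l, hne, hnt, hch, ⟨g, hg⟩, rfl⟩ := h
  rcases master_inl s hne hnt hch with h1 | ⟨l', hne', hnt', hch', hh', hp'⟩
  · exfalso
    have hx : sylProd l = (Coprod.inl s⁻¹ : Coprod G₁ G₂) := by
      rw [eq_inv_of_mul_eq_one_left h1, ← map_inv]
    by_cases hs1 : s⁻¹ = (1 : G₁)
    · rw [hs1, map_one] at hx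
      exact beginsRight_ne_one h0 hx
    · exact not_beginsLeft_of_beginsRight h0 (hx ▸ beginsLeft_inl hs1)
  · refine beginsRight_of l' hne' hnt' hch' ?_ hp'
    rw [hh', hg]; rfl

abbrev Rep (x : Coprod G₁ G₂) : Prop := x = 1 ∨ beginsLeft x ∨ beginsRight x

theorem one_mul_inl_rep (s : G₁) : (1 : Coprod G₁ G₂) * Coprod.inl s = 1 ∨
    beginsLeft ((1 : Coprod G₁ G₂) * Coprod.inl s) := by
  rw [one_mul]
  by_cases hs : s = 1
  · left; rw [hs, map_one]
  · right; exact beginsLeft_inl hs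

theorem one_mul_inr_rep (s : G₂) : (1 : Coprod G₁ G₂) * Coprod.inr s = 1 ∨
    beginsRight ((1 : Coprod G₁ G₂) * Coprod.inr s) := by
  rw [one_mul]
  by_cases hs : s = 1
  · left; rw [hs, map_one]
  · right; exact beginsRight_inr hs

theorem rep_mul_inl {x : Coprod G₁ G₂} (hx : Rep x) (s : G₁) : Rep (x * Coprod.inl s) := by
  rcases hx with rfl | hL | hR
  · rcases one_mul_inl_rep (G₂ := G₂) s with h | h
    · exact Or.inl h
    · exact Or.inr (Or.inl h)
  · rcases beginsLeft_mul_inl hL s with h | h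
    · exact Or.inl h
    · exact Or.inr (Or.inl h)
  · exact Or.inr (Or.inr (beginsRight_mul_inl hR s))

theorem rep_mul_inr {x : Coprod G₁ G₂} (hx : Rep x) (s : G₂) : Rep (x * Coprod.inr s) := by
  rcases hx with rfl | hL | hR
  · rcases one_mul_inr_rep (G₁ := G₁) s with h | h
    · exact Or.inl h
    · exact Or.inr (Or.inr h)
  · exact Or.inr (Or.inl (beginsLeft_mul_inr hL s))
  · rcases beginsRight_mul_inr hR s with h | h
    · exact Or.inl h
    · exact Or.inr (Or.inr h)

theorem rep_mul_syl {x : Coprod G₁ G₂} (hx : Rep x) (l : List (G₁ ⊕ G₂)) :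
    Rep (x * sylProd l) := by
  induction l using List.reverseRecOn with
  | nil =>
      have : sylProd ([] : List (G₁ ⊕ G₂)) = 1 := rfl
      rwa [this, mul_one]
  | append_singleton L a ih =>
      rw [sylProd_append, ← mul_assoc]
      rcases a with g | h
      · exact rep_mul_inl ih g
      · exact rep_mul_inr ih h

theorem exists_rep (x : Coprod G₁ G₂) : Rep x := by
  refine Coprod.induction_on x (fun m => ?_) (fun n => ?_) (fun a b ha hb => ?_)
  · have := one_mul_inl_rep (G₂ := G₂) m
    rw [one_mul] at this
    rcases this with h | h
    · exact Or.inl h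
    · exact Or.inr (Or.inl h)
  · have := one_mul_inr_rep (G₁ := G₁) n
    rw [one_mul] at this
    rcases this with h | h
    · exact Or.inl h
    · exact Or.inr (Or.inr h)
  · rcases hb with rfl | hL | hR
    · rwa [mul_one]
    · obtain ⟨l, -, -, -, -, rfl⟩ := hL
      exact rep_mul_syl ha l
    · obtain ⟨l, -, -, -, -, rfl⟩ := hR
      exact rep_mul_syl ha l

end SecA
section SecB

open Perc

variable {G ι : Type*} [Group G]

theorem clusterIn_subset (f : ι → G) (V : Set G) (ω : Config (G × ι)) (h1 : (1:G) ∈ V) :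
    clusterIn f V ω ⊆ V := by
  intro x hx
  have hx' : Relation.ReflTransGen (fun a b => Step f ω a b ∧ a ∈ V ∧ b ∈ V) 1 x := hx
  rcases Relation.ReflTransGen.cases_tail hx' with rfl | ⟨c, _, hstep⟩
  · exact h1
  · exact hstep.2.2

theorem cluster_decomp (f : ι → G) (V₁ V₂ : Set G) (ω : Config (G × ι))
    (h1 : (1:G) ∈ V₁) (h2 : (1:G) ∈ V₂) (hcap : V₁ ∩ V₂ ⊆ {1})
    (hedge : ∀ (a : G) (i : ι), (a ∈ V₁ ∧ a * f i ∈ V₁) ∨ (a ∈ V₂ ∧ a * f i ∈ V₂)) :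
    cluster f ω = clusterIn f V₁ ω ∪ clusterIn f V₂ ω := by
  ext x
  constructor
  · intro hx
    have hx' : Relation.ReflTransGen (Step f ω) 1 x := hx
    clear hx
    induction hx' with
    | refl => exact Or.inl Relation.ReflTransGen.refl
    | @tail b c hab hbc ih =>
      have hbx : (b ∈ V₁ ∧ c ∈ V₁) ∨ (b ∈ V₂ ∧ c ∈ V₂) := by
        obtain ⟨i, hcase⟩ := hbc
        rcases hcase with ⟨hop, rfl⟩ | ⟨hop, hbeq⟩
        · exact hedge b i
        · rw [hbeq]
          exact ((hedge c i).imp And.symm And.symm)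
      rcases hbx with ⟨hb1, hc1⟩ | ⟨hb2, hc2⟩
      · rcases ih with hC | hC
        · exact Or.inl (Relation.ReflTransGen.tail hC ⟨hbc, hb1, hc1⟩)
        · have hbV : b ∈ V₂ := clusterIn_subset f V₂ ω h2 hC
          have hb : b = 1 := hcap ⟨hb1, hbV⟩
          subst hb
          exact Or.inl (Relation.ReflTransGen.single ⟨hbc, hb1, hc1⟩)
      · rcases ih with hC | hC
        · have hbV : b ∈ V₁ := clusterIn_subset f V₁ ω h1 hC
          have hb : b = 1 := hcap ⟨hbV, hb2⟩
          subst hb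
          exact Or.inr (Relation.ReflTransGen.single ⟨hbc, hb2, hc2⟩)
        · exact Or.inr (Relation.ReflTransGen.tail hC ⟨hbc, hb2, hc2⟩)
  · rintro (h | h)
    · exact Relation.ReflTransGen.mono (r := fun a b => Step f ω a b ∧ a ∈ V₁ ∧ b ∈ V₁) (fun a b hab => hab.1) 1 x h
    · exact Relation.ReflTransGen.mono (r := fun a b => Step f ω a b ∧ a ∈ V₂ ∧ b ∈ V₂) (fun a b hab => hab.1) 1 x h


end SecB
section SecC

open Perc

variable {G ι : Type*} [Group G]

def stepOf (f : ι → G) (p : ι × Bool) : G := cond p.2 (f p.1) (f p.1)⁻¹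

def wordProd (f : ι → G) (w : List (ι × Bool)) : G := (w.map (stepOf f)).prod

def okFrom (f : ι → G) (V : Set G) (ω : Config (G × ι)) : G → List (ι × Bool) → Prop
  | _, [] => True
  | a, p :: t =>
      a ∈ V ∧ a * stepOf f p ∈ V ∧
        (cond p.2 (ω (a, p.1)) (ω (a * stepOf f p, p.1))) = true ∧
        okFrom f V ω (a * stepOf f p) t

theorem wordProd_append (f : ι → G) (w : List (ι × Bool)) (p : ι × Bool) :
    wordProd f (w ++ [p]) = wordProd f w * stepOf f p := by
  simp [wordProd]

theorem okFrom_append (f : ι → G) (V : Set G) (ω : Config (G × ι)) :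
    ∀ (w : List (ι × Bool)) (a : G) (p : ι × Bool), okFrom f V ω a w →
      a * wordProd f w ∈ V → a * wordProd f w * stepOf f p ∈ V →
      (cond p.2 (ω (a * wordProd f w, p.1)) (ω (a * wordProd f w * stepOf f p, p.1))) = true →
      okFrom f V ω a (w ++ [p]) := by
  intro w
  induction w with
  | nil =>
    intro a p _ h1 h2 h3
    have ha : a * wordProd f [] = a := by simp [wordProd]
    rw [ha] at h1 h2 h3
    exact ⟨h1, h2, h3, trivial⟩
  | cons q t ih =>
    intro a p hok h1 h2 h3
    have hass : a * wordProd f (q :: t) = (a * stepOf f q) * wordProd f t := by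
      simp [wordProd, mul_assoc]
    rw [hass] at h1 h2 h3
    exact ⟨hok.1, hok.2.1, hok.2.2.1, ih (a * stepOf f q) p hok.2.2.2 h1 h2 h3⟩

theorem okFrom_reach (f : ι → G) (V : Set G) (ω : Config (G × ι)) :
    ∀ (w : List (ι × Bool)) (a : G), okFrom f V ω a w →
      Relation.ReflTransGen (fun u v => Step f ω u v ∧ u ∈ V ∧ v ∈ V) a (a * wordProd f w) := by
  intro w
  induction w with
  | nil => intro a _; simp only [wordProd, List.map_nil, List.prod_nil, mul_one]; exact .refl
  | cons p t ih =>
    intro a hok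
    obtain ⟨h1, h2, h3, h4⟩ := hok
    have hstep : Step f ω a (a * stepOf f p) := by
      rcases p with ⟨i, d⟩
      cases d
      · exact ⟨i, Or.inr ⟨h3, by simp [stepOf, mul_assoc]⟩⟩
      · exact ⟨i, Or.inl ⟨h3, rfl⟩⟩
    have hass : a * wordProd f (p :: t) = (a * stepOf f p) * wordProd f t := by
      simp [wordProd, mul_assoc]
    rw [hass]
    exact Relation.ReflTransGen.head ⟨hstep, h1, h2⟩ (ih _ h4)

theorem mem_clusterIn_iff (f : ι → G) (V : Set G) (ω : Config (G × ι)) (x : G) :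
    x ∈ clusterIn f V ω ↔ ∃ w, okFrom f V ω 1 w ∧ wordProd f w = x := by
  constructor
  · intro hx
    have hx' : Relation.ReflTransGen (fun u v => Step f ω u v ∧ u ∈ V ∧ v ∈ V) 1 x := hx
    clear hx
    induction hx' with
    | refl => exact ⟨[], trivial, rfl⟩
    | @tail b c hab hbc ih =>
      obtain ⟨w, hok, hwp⟩ := ih
      obtain ⟨⟨i, hcase⟩, hbV, hcV⟩ := hbc
      have h1w : (1 : G) * wordProd f w = b := by rw [one_mul, hwp]
      rcases hcase with ⟨hop, hceq⟩ | ⟨hop, hbeq⟩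
      · refine ⟨w ++ [(i, true)], ?_, ?_⟩
        · refine okFrom_append f V ω w 1 (i, true) hok (h1w ▸ hbV) ?_ ?_
          · rw [h1w]
            show b * f i ∈ V
            rw [← hceq]
            exact hcV
          · rw [h1w]
            exact hop
        · rw [wordProd_append, hwp]
          show b * f i = c
          rw [hceq]
      · have hkey : b * stepOf f (i, false) = c := by
          show b * (f i)⁻¹ = c
          rw [hbeq, mul_inv_cancel_right]
        refine ⟨w ++ [(i, false)], ?_, ?_⟩
        · refine okFrom_append f V ω w 1 (i, false) hok (h1w ▸ hbV) ?_ ?_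
          · rw [h1w, hkey]
            exact hcV
          · rw [h1w, hkey]
            exact hop
        · rw [wordProd_append, hwp]
          exact hkey
  · rintro ⟨w, hok, rfl⟩
    have := okFrom_reach f V ω w 1 hok
    rwa [one_mul] at this

theorem measurableSet_coord (e : G × ι) :
    MeasurableSet {ω : Config (G × ι) | ω e = true} := by
  show MeasurableSet ((fun ω : Config (G × ι) => ω e) ⁻¹' {true})
  exact measurable_pi_apply e (measurableSet_singleton true)

theorem measurableSet_okFrom (f : ι → G) (V : Set G) (w : List (ι × Bool)) :
    ∀ a : G, MeasurableSet {ω : Config (G × ι) | okFrom f V ω a w} := by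
  induction w with
  | nil =>
    intro a
    have : {ω : Config (G × ι) | okFrom f V ω a []} = Set.univ := by
      ext ω; simp [okFrom]
    rw [this]; exact MeasurableSet.univ
  | cons p t ih =>
    intro a
    by_cases h1 : a ∈ V
    · by_cases h2 : a * stepOf f p ∈ V
      · have : {ω : Config (G × ι) | okFrom f V ω a (p :: t)} =
            {ω : Config (G × ι) | (cond p.2 (ω (a, p.1)) (ω (a * stepOf f p, p.1))) = true} ∩
              {ω : Config (G × ι) | okFrom f V ω (a * stepOf f p) t} := by
          ext ω; simp [okFrom, h1, h2]
        rw [this]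
        refine MeasurableSet.inter ?_ (ih _)
        rcases p with ⟨i, d⟩
        cases d
        · exact measurableSet_coord _
        · exact measurableSet_coord _
      · have : {ω : Config (G × ι) | okFrom f V ω a (p :: t)} = ∅ := by
          ext ω; simp [okFrom, h1, h2]
        rw [this]; exact MeasurableSet.empty
    · have : {ω : Config (G × ι) | okFrom f V ω a (p :: t)} = ∅ := by
        ext ω; simp [okFrom, h1]
      rw [this]; exact MeasurableSet.empty

theorem measurableSet_mem_clusterIn [Countable ι] (f : ι → G) (V : Set G) (x : G) :
    MeasurableSet {ω : Config (G × ι) | x ∈ clusterIn f V ω} := by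
  have : {ω : Config (G × ι) | x ∈ clusterIn f V ω} =
      ⋃ w ∈ {w : List (ι × Bool) | wordProd f w = x}, {ω : Config (G × ι) | okFrom f V ω 1 w} := by
    ext ω
    simp only [Set.mem_setOf_eq, Set.mem_iUnion, exists_prop]
    rw [mem_clusterIn_iff]
    constructor
    · rintro ⟨w, h1, h2⟩; exact ⟨w, h2, h1⟩
    · rintro ⟨w, h1, h2⟩; exact ⟨w, h2, h1⟩
  rw [this]
  exact MeasurableSet.biUnion (Set.to_countable _) fun w _ => measurableSet_okFrom f V w 1

theorem clusterIn_subset_range (f : ι → G) (V : Set G) (ω : Config (G × ι)) :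
    clusterIn f V ω ⊆ Set.range (wordProd f) := by
  intro x hx
  obtain ⟨w, _, hwp⟩ := (mem_clusterIn_iff f V ω x).1 hx
  exact ⟨w, hwp⟩

theorem measurableSet_clusterIn_infinite [Countable ι] (f : ι → G) (V : Set G) :
    MeasurableSet {ω : Config (G × ι) | (clusterIn f V ω).Infinite} := by
  classical
  have key : {ω : Config (G × ι) | (clusterIn f V ω).Infinite} =
      (⋃ F : Finset (List (ι × Bool)),
        {ω : Config (G × ι) | clusterIn f V ω ⊆ wordProd f '' ↑F})ᶜ := by
    ext ω
    simp only [Set.mem_compl_iff, Set.mem_iUnion, Set.mem_setOf_eq, not_exists]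
    constructor
    · intro hinf F hF
      exact hinf ((F.finite_toSet.image _).subset hF)
    · intro h
      by_contra hfin
      rw [Set.not_infinite] at hfin
      refine h (hfin.toFinset.image (Function.invFun (wordProd f))) ?_
      intro x hx
      have hxr : x ∈ Set.range (wordProd f) := clusterIn_subset_range f V ω hx
      refine ⟨Function.invFun (wordProd f) x, ?_, Function.invFun_eq hxr⟩
      exact_mod_cast Finset.mem_image_of_mem _ (hfin.mem_toFinset.2 hx)
  rw [key]
  refine (MeasurableSet.iUnion fun F => ?_).compl
  have : {ω : Config (G × ι) | clusterIn f V ω ⊆ wordProd f '' ↑F} =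
      ⋂ w : List (ι × Bool),
        {ω : Config (G × ι) | wordProd f w ∈ clusterIn f V ω → wordProd f w ∈ wordProd f '' ↑F} := by
    ext ω
    simp only [Set.mem_setOf_eq, Set.mem_iInter]
    constructor
    · exact fun hss w h => hss h
    · intro h x hx
      obtain ⟨w, rfl⟩ := clusterIn_subset_range f V ω hx
      exact h w hx
  rw [this]
  refine MeasurableSet.iInter fun w => ?_
  by_cases himg : wordProd f w ∈ wordProd f '' ↑F
  · have : {ω : Config (G × ι) | wordProd f w ∈ clusterIn f V ω → wordProd f w ∈ wordProd f '' ↑F}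
        = Set.univ := by
      ext ω; simp [himg]
    rw [this]; exact MeasurableSet.univ
  · have : {ω : Config (G × ι) | wordProd f w ∈ clusterIn f V ω → wordProd f w ∈ wordProd f '' ↑F}
        = {ω : Config (G × ι) | wordProd f w ∈ clusterIn f V ω}ᶜ := by
      ext ω; simp [himg]
    rw [this]
    exact (measurableSet_mem_clusterIn f V _).compl

def relevant (f : ι → G) (V : Set G) : Set (G × ι) :=
  {e | e.1 ∈ V ∧ e.1 * f e.2 ∈ V ∧ e.1 * f e.2 ≠ e.1}

theorem clusterIn_eq_of_agree (f : ι → G) (V : Set G) {ω ω' : Config (G × ι)}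
    (hag : ∀ e ∈ relevant f V, ω e = ω' e) :
    clusterIn f V ω = clusterIn f V ω' := by
  suffices H : ∀ (ω ω' : Config (G × ι)), (∀ e ∈ relevant f V, ω e = ω' e) →
      clusterIn f V ω ⊆ clusterIn f V ω' by
    exact le_antisymm (H ω ω' hag) (H ω' ω fun e he => (hag e he).symm)
  clear hag ω ω'
  intro ω ω' hag x hx
  have hx' : Relation.ReflTransGen (fun u v => Step f ω u v ∧ u ∈ V ∧ v ∈ V) 1 x := hx
  clear hx
  induction hx' with
  | refl => exact Relation.ReflTransGen.refl
  | @tail b c hab hbc ih =>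
    obtain ⟨⟨i, hcase⟩, hbV, hcV⟩ := hbc
    by_cases hbc_eq : c = b
    · rwa [hbc_eq]
    rcases hcase with ⟨hop, hceq⟩ | ⟨hop, hbeq⟩
    · have he : (b, i) ∈ relevant f V := ⟨hbV, hceq ▸ hcV, fun h => hbc_eq (hceq.trans h)⟩
      exact Relation.ReflTransGen.tail ih
        ⟨⟨i, Or.inl ⟨(hag _ he) ▸ hop, hceq⟩⟩, hbV, hcV⟩
    · have he : (c, i) ∈ relevant f V :=
        ⟨hcV, hbeq ▸ hbV, fun h => hbc_eq (hbeq.trans h).symm⟩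
      exact Relation.ReflTransGen.tail ih
        ⟨⟨i, Or.inr ⟨(hag _ he) ▸ hop, hbeq⟩⟩, hbV, hcV⟩

end SecC
section SecD

open Perc

variable {E : Type*}

def cylinders (D : Set E) : Set (Set (Config E)) :=
  {A | ∃ (F : Finset E) (σ : E → Bool), ↑F ⊆ D ∧ A = {ω : Config E | ∀ e ∈ F, ω e = σ e}}

theorem isProbability {p : ℝ} {μ : Measure (Config E)} (hμ : IsBernoulli p μ) :
    IsProbabilityMeasure μ := by
  constructor
  have := hμ ∅ (fun _ => true)
  simpa using this

theorem measurableSet_cylinder {D : Set E} {A : Set (Config E)} (h : A ∈ cylinders D) :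
    MeasurableSet A := by
  obtain ⟨F, σ, -, rfl⟩ := h
  have : {ω : Config E | ∀ e ∈ F, ω e = σ e} = ⋂ e ∈ F, {ω : Config E | ω e = σ e} := by
    ext; simp
  rw [this]
  refine MeasurableSet.biInter F.countable_toSet fun e _ => ?_
  show MeasurableSet ((fun ω : Config E => ω e) ⁻¹' {σ e})
  exact measurable_pi_apply e (measurableSet_singleton _)

theorem isPiSystem_cylinders (D : Set E) : IsPiSystem (cylinders D) := by
  classical
  rintro A ⟨F₁, σ₁, hF₁, rfl⟩ B ⟨F₂, σ₂, hF₂, rfl⟩ hne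
  obtain ⟨ω₀, hω₀⟩ := hne
  refine ⟨F₁ ∪ F₂, fun e => if e ∈ F₁ then σ₁ e else σ₂ e, ?_, ?_⟩
  · rw [Finset.coe_union]
    exact Set.union_subset hF₁ hF₂
  ext ω
  simp only [Set.mem_inter_iff, Set.mem_setOf_eq, Finset.mem_union]
  constructor
  · rintro ⟨h1, h2⟩ e he
    by_cases hm : e ∈ F₁
    · rw [if_pos hm]; exact h1 e hm
    · rw [if_neg hm]
      rcases he with he | he
      · exact absurd he hm
      · exact h2 e he
  · intro h
    constructor
    · intro e he
      have := h e (Or.inl he)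
      rwa [if_pos he] at this
    · intro e he
      have := h e (Or.inr he)
      by_cases h1 : e ∈ F₁
      · rw [if_pos h1] at this
        have e1 := hω₀.1 e h1
        have e2 := hω₀.2 e he
        exact this.trans (e1.symm.trans e2)
      · rwa [if_neg h1] at this

theorem indepSets_cylinders {p : ℝ} {μ : Measure (Config E)} (hμ : IsBernoulli p μ)
    {D₁ D₂ : Set E} (hD : Disjoint D₁ D₂) :
    ProbabilityTheory.IndepSets (cylinders D₁) (cylinders D₂) μ := by
  classical
  rw [ProbabilityTheory.IndepSets_iff]
  rintro A B ⟨F₁, σ₁, hF₁, rfl⟩ ⟨F₂, σ₂, hF₂, rfl⟩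
  have hdis : Disjoint F₁ F₂ := by
    rw [Finset.disjoint_left]
    intro e h1 h2
    exact Set.disjoint_left.1 hD (hF₁ h1) (hF₂ h2)
  have hAB : {ω : Config E | ∀ e ∈ F₁, ω e = σ₁ e} ∩ {ω : Config E | ∀ e ∈ F₂, ω e = σ₂ e}
      = {ω : Config E | ∀ e ∈ (F₁ ∪ F₂ : Finset E), ω e
          = (fun e => if e ∈ F₁ then σ₁ e else σ₂ e) e} := by
    ext ω
    simp only [Set.mem_inter_iff, Set.mem_setOf_eq, Finset.mem_union]
    constructor
    · rintro ⟨h1, h2⟩ e he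
      by_cases hm : e ∈ F₁
      · rw [if_pos hm]; exact h1 e hm
      · rw [if_neg hm]
        rcases he with he | he
        · exact absurd he hm
        · exact h2 e he
    · intro h
      refine ⟨fun e he => ?_, fun e he => ?_⟩
      · have := h e (Or.inl he)
        rwa [if_pos he] at this
      · have := h e (Or.inr he)
        rwa [if_neg (Finset.disjoint_right.1 hdis he)] at this
  rw [hAB, hμ (F₁ ∪ F₂) _, hμ F₁ σ₁, hμ F₂ σ₂, Finset.prod_union hdis]
  congr 1
  · exact Finset.prod_congr rfl fun e he => by rw [if_pos he]
  · exact Finset.prod_congr rfl fun e he => by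
      rw [if_neg (Finset.disjoint_right.1 hdis he)]

theorem measure_inter_eq_mul_of_indep {p : ℝ} {μ : Measure (Config E)} (hμ : IsBernoulli p μ)
    {D₁ D₂ : Set E} (hD : Disjoint D₁ D₂) {A B : Set (Config E)}
    (hA : MeasurableSet[MeasurableSpace.generateFrom (cylinders D₁)] A)
    (hB : MeasurableSet[MeasurableSpace.generateFrom (cylinders D₂)] B) :
    μ (A ∩ B) = μ A * μ B := by
  have : IsProbabilityMeasure μ := isProbability hμ
  have h1 : MeasurableSpace.generateFrom (cylinders D₁) ≤ _ :=
    MeasurableSpace.generateFrom_le fun A hA => measurableSet_cylinder hA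
  have h2 : MeasurableSpace.generateFrom (cylinders D₂) ≤ _ :=
    MeasurableSpace.generateFrom_le fun A hA => measurableSet_cylinder hA
  have hindep := ProbabilityTheory.IndepSets.indep h1 h2 (isPiSystem_cylinders D₁)
    (isPiSystem_cylinders D₂) rfl rfl (indepSets_cylinders hμ hD)
  exact (hindep.indepSet_of_measurableSet hA hB).measure_inter_eq_mul


end SecD

section SecE

variable {G ι : Type*} [Group G]

theorem event_mem_generateFrom [Countable ι] (f : ι → G) (V : Set G) :
    MeasurableSet[MeasurableSpace.generateFrom (cylinders (relevant f V))]
      {ω : Perc.Config (G × ι) | (Perc.clusterIn f V ω).Infinite} := by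
  classical
  set D := relevant f V with hD
  set r : Perc.Config (G × ι) → (↥D → Bool) := fun ω d => ω d.1 with hr_def
  set ext : (↥D → Bool) → Perc.Config (G × ι) :=
    fun η e => if h : e ∈ D then η ⟨e, h⟩ else false with hext_def
  have hr : Measurable[MeasurableSpace.generateFrom (cylinders D)] r := by
    refine (@measurable_pi_iff _ _ _ (MeasurableSpace.generateFrom (cylinders D)) _ r).2
      fun d => ?_
    refine @measurable_to_countable' _ _ _ _ (MeasurableSpace.generateFrom (cylinders D))
      _ fun b => ?_
    have hmem : ((fun ω : Perc.Config (G × ι) => ω d.1) ⁻¹' {b}) ∈ cylinders D := by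
      refine ⟨{d.1}, fun _ => b, by simp [d.2], ?_⟩
      ext ω; simp
    exact MeasurableSpace.measurableSet_generateFrom hmem
  have hext : Measurable ext := by
    refine measurable_pi_lambda _ fun e => ?_
    by_cases h : e ∈ D
    · simp only [hext_def, dif_pos h]
      exact measurable_pi_apply _
    · simp only [hext_def, dif_neg h]
      exact measurable_const
  have hloc : ∀ ω, Perc.clusterIn f V (ext (r ω)) = Perc.clusterIn f V ω := by
    intro ω
    refine clusterIn_eq_of_agree f V fun e he => ?_
    simp only [hext_def, hr_def]
    rw [dif_pos (hD ▸ he)]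
  have hrw : {ω : Perc.Config (G × ι) | (Perc.clusterIn f V ω).Infinite}
      = r ⁻¹' (ext ⁻¹' {ω : Perc.Config (G × ι) | (Perc.clusterIn f V ω).Infinite}) := by
    ext ω
    simp only [Set.mem_preimage, Set.mem_setOf_eq]
    rw [hloc ω]
  rw [hrw]
  exact hr (hext (measurableSet_clusterIn_infinite f V))

end SecE
end PercAux

/-- In the Cayley graph of `G₁ * G₂` (w.r.t. `S₁ ⊔ S₂`), let `A(p)`
(resp. `B(p)`) be the probability that the cluster of the identity in the subgraph
induced on `{e} ∪ P₁` (resp. `{e} ∪ P₂`) is infinite, where `Pᵢ` is the set of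
nontrivial elements whose normal form begins with a nontrivial syllable of `Gᵢ`.  Then
for every `p ∈ [0,1]` the percolation function satisfies
`θ(p) = A(p) + B(p) - A(p)·B(p)`. -/
theorem percolation_function_from_AB
    {G₁ G₂ : Type*} [Group G₁] [Group G₂] [Nontrivial G₁] [Nontrivial G₂]
    (S₁ : Set G₁) (S₂ : Set G₂) (hfin₁ : S₁.Finite) (hfin₂ : S₂.Finite)
    (hgen₁ : Subgroup.closure S₁ = ⊤) (hgen₂ : Subgroup.closure S₂ = ⊤)
    (μ : ℝ → Measure (Config (Monoid.Coprod G₁ G₂ × (S₁ ⊕ S₂))))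
    (hμ : ∀ p ∈ Set.Icc (0 : ℝ) 1, IsBernoulli p (μ p))
    (p : ℝ) (hp : p ∈ Set.Icc (0 : ℝ) 1) :
    theta (coprodGens S₁ S₂) (μ p)
      = (μ p {ω | (clusterIn (coprodGens S₁ S₂) (insert 1 {x | beginsLeft x}) ω).Infinite}).toReal
        + (μ p {ω | (clusterIn (coprodGens S₁ S₂) (insert 1 {x | beginsRight x}) ω).Infinite}).toReal
        - (μ p {ω | (clusterIn (coprodGens S₁ S₂) (insert 1 {x | beginsLeft x}) ω).Infinite}).toReal
          * (μ p {ω | (clusterIn (coprodGens S₁ S₂) (insert 1 {x | beginsRight x}) ω).Infinite}).toReal := by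
  classical
  haveI := hfin₁.to_subtype
  haveI := hfin₂.to_subtype
  have hμp := hμ p hp
  haveI : IsProbabilityMeasure (μ p) := PercAux.isProbability hμp
  set f : ↥S₁ ⊕ ↥S₂ → Monoid.Coprod G₁ G₂ := coprodGens S₁ S₂ with hf
  set V₁ : Set (Monoid.Coprod G₁ G₂) := insert 1 {x | beginsLeft x} with hV₁
  set V₂ : Set (Monoid.Coprod G₁ G₂) := insert 1 {x | beginsRight x} with hV₂
  have h1V₁ : (1 : Monoid.Coprod G₁ G₂) ∈ V₁ := Set.mem_insert _ _
  have h1V₂ : (1 : Monoid.Coprod G₁ G₂) ∈ V₂ := Set.mem_insert _ _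
  have memV₁ : ∀ x : Monoid.Coprod G₁ G₂, (x = 1 ∨ beginsLeft x) → x ∈ V₁ := by
    rintro x (rfl | hx)
    · exact h1V₁
    · exact Set.mem_insert_of_mem _ hx
  have memV₂ : ∀ x : Monoid.Coprod G₁ G₂, (x = 1 ∨ beginsRight x) → x ∈ V₂ := by
    rintro x (rfl | hx)
    · exact h1V₂
    · exact Set.mem_insert_of_mem _ hx
  have hcap : V₁ ∩ V₂ ⊆ {1} := by
    rintro x ⟨hx1, hx2⟩
    rcases Set.mem_insert_iff.1 hx1 with rfl | hxl
    · exact Set.mem_singleton _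
    rcases Set.mem_insert_iff.1 hx2 with rfl | hxr
    · exact Set.mem_singleton _
    · exact absurd hxl (PercAux.not_beginsLeft_of_beginsRight hxr)
  have hedge : ∀ (a : Monoid.Coprod G₁ G₂) (i : ↥S₁ ⊕ ↥S₂),
      (a ∈ V₁ ∧ a * f i ∈ V₁) ∨ (a ∈ V₂ ∧ a * f i ∈ V₂) := by
    intro a i
    have hfi : ∀ s : ↥S₁, f (Sum.inl s) = Monoid.Coprod.inl (s : G₁) := fun s => rfl
    have hfi' : ∀ s : ↥S₂, f (Sum.inr s) = Monoid.Coprod.inr (s : G₂) := fun s => rfl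
    rcases PercAux.exists_rep a with rfl | hL | hR
    · rcases i with s | s
      · refine Or.inl ⟨h1V₁, memV₁ _ ?_⟩
        rw [hfi]
        exact PercAux.one_mul_inl_rep (G₂ := G₂) (s : G₁)
      · refine Or.inr ⟨h1V₂, memV₂ _ ?_⟩
        rw [hfi']
        exact PercAux.one_mul_inr_rep (G₁ := G₁) (s : G₂)
    · refine Or.inl ⟨Set.mem_insert_of_mem _ hL, ?_⟩
      rcases i with s | s
      · rw [hfi]
        exact memV₁ _ (PercAux.beginsLeft_mul_inl hL _)
      · rw [hfi']
        exact Set.mem_insert_of_mem _ (PercAux.beginsLeft_mul_inr hL _)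
    · refine Or.inr ⟨Set.mem_insert_of_mem _ hR, ?_⟩
      rcases i with s | s
      · rw [hfi]
        exact Set.mem_insert_of_mem _ (PercAux.beginsRight_mul_inl hR _)
      · rw [hfi']
        exact memV₂ _ (PercAux.beginsRight_mul_inr hR _)
  have hdecomp : ∀ ω, cluster f ω = clusterIn f V₁ ω ∪ clusterIn f V₂ ω :=
    fun ω => PercAux.cluster_decomp f V₁ V₂ ω h1V₁ h1V₂ hcap hedge
  have hunion : {ω : Config (Monoid.Coprod G₁ G₂ × (↥S₁ ⊕ ↥S₂)) | (cluster f ω).Infinite}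
      = {ω | (clusterIn f V₁ ω).Infinite} ∪ {ω | (clusterIn f V₂ ω).Infinite} := by
    ext ω
    simp only [Set.mem_setOf_eq, Set.mem_union, hdecomp ω, Set.infinite_union]
  have hDdisj : Disjoint (PercAux.relevant f V₁) (PercAux.relevant f V₂) := by
    rw [Set.disjoint_left]
    rintro ⟨a, i⟩ ⟨ha1, hb1, hne⟩ ⟨ha2, hb2, -⟩
    refine hne ?_
    have h1 : a * f i = 1 := hcap ⟨hb1, hb2⟩
    have h2 : a = 1 := hcap ⟨ha1, ha2⟩
    rw [h1, h2]
  have hA := PercAux.event_mem_generateFrom f V₁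
  have hB := PercAux.event_mem_generateFrom f V₂
  have hprod : μ p ({ω | (clusterIn f V₁ ω).Infinite} ∩ {ω | (clusterIn f V₂ ω).Infinite})
      = μ p {ω | (clusterIn f V₁ ω).Infinite} * μ p {ω | (clusterIn f V₂ ω).Infinite} :=
    PercAux.measure_inter_eq_mul_of_indep hμp hDdisj hA hB
  have hmeas2 : MeasurableSet {ω : Config (Monoid.Coprod G₁ G₂ × (↥S₁ ⊕ ↥S₂)) |
      (clusterIn f V₂ ω).Infinite} := PercAux.measurableSet_clusterIn_infinite f V₂
  have hsum := measure_union_add_inter (μ := μ p)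
      {ω | (clusterIn f V₁ ω).Infinite} hmeas2
  have hne1 : μ p ({ω | (clusterIn f V₁ ω).Infinite} ∪ {ω | (clusterIn f V₂ ω).Infinite}) ≠ ⊤ :=
    measure_ne_top _ _
  have hne2 : μ p ({ω | (clusterIn f V₁ ω).Infinite} ∩ {ω | (clusterIn f V₂ ω).Infinite}) ≠ ⊤ :=
    measure_ne_top _ _
  have hne3 : μ p {ω | (clusterIn f V₁ ω).Infinite} ≠ ⊤ := measure_ne_top _ _
  have hne4 : μ p {ω | (clusterIn f V₂ ω).Infinite} ≠ ⊤ := measure_ne_top _ _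
  have htr := congrArg ENNReal.toReal hsum
  rw [ENNReal.toReal_add hne1 hne2, ENNReal.toReal_add hne3 hne4, hprod,
    ENNReal.toReal_mul] at htr
  show (μ p {ω | (cluster f ω).Infinite}).toReal = _
  rw [hunion]
  linarith
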